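/- For n > 0, the weighted partition function Z₂(n) = ∫_{ℝ²} |w2|·exp(-n·w1^2·w2^4)·(1/(2π))·exp(-(w1^2+w2^2)/2) dw1 dw2 satisfies n^{1/2}·Z₂(n)/log n → (1/(4π))·Γ(1/2) = 1/(4√π) as n → ∞. -/

import Mathlib

open Real MeasureTheory Filter Set

/-- Weighted partition function with weight `|w2|` for `f(w1,w2) = w1^2 w2^4`. -/
noncomputable def Z2b (n : ℝ) : ℝ :=
  ∫ w1 : ℝ, ∫ w2 : ℝ,
    |w2| * Real.exp (-(n * (w1 ^ 2 * w2 ^ 4))) *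
      (1 / (2 * π) * Real.exp (-(w1 ^ 2 + w2 ^ 2) / 2))

-- integrand of reduced integral
noncomputable def Kf (n : ℝ) : ℝ → ℝ := fun x => x * Real.exp (-x^2/2) / Real.sqrt (n * x^4 + 1/2)

lemma sqrt_den_pos {n : ℝ} (hn : 0 < n) (x : ℝ) : 0 < Real.sqrt (n * x^4 + 1/2) := by
  apply Real.sqrt_pos.2; positivity

lemma Kf_cont {n : ℝ} (hn : 0 < n) : Continuous (Kf n) := by
  apply Continuous.div
  · exact continuous_id.mul (Real.continuous_exp.comp (by continuity))
  · exact Real.continuous_sqrt.comp (by continuity)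
  · exact fun x => (sqrt_den_pos hn x).ne'

lemma Kf_integrableOn {n : ℝ} (hn : 0 < n) : IntegrableOn (Kf n) (Ioi 0) := by
  have hg : Integrable (fun x : ℝ => Real.sqrt 2 * (x * Real.exp (-(1/2) * x^2))) := by
    exact (integrable_mul_exp_neg_mul_sq (by norm_num : (0:ℝ) < 1/2)).const_mul _
  refine Integrable.mono' hg.integrableOn ((Kf_cont hn).aestronglyMeasurable.restrict) ?_
  refine (ae_restrict_iff' measurableSet_Ioi).2 (Filter.Eventually.of_forall fun x hx => ?_)
  have hx0 : (0:ℝ) < x := hx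
  have hs := sqrt_den_pos hn x
  have hxe : 0 ≤ x * Real.exp (-x^2/2) := by positivity
  have h1 : (1:ℝ) ≤ Real.sqrt 2 * Real.sqrt (n * x^4 + 1/2) := by
    rw [← Real.sqrt_mul (by norm_num : (0:ℝ) ≤ 2)]
    rw [Real.one_le_sqrt]; nlinarith [pow_nonneg hx0.le 4]
  have : ‖Kf n x‖ = x * Real.exp (-x^2/2) / Real.sqrt (n * x^4 + 1/2) := by
    rw [Real.norm_eq_abs, abs_of_nonneg]; · rfl
    · exact div_nonneg hxe hs.le
  rw [this, div_le_iff₀ hs, show -(1/2) * x^2 = -x^2/2 by ring]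
  calc x * Real.exp (-x^2/2) = x * Real.exp (-x^2/2) * 1 := by ring
    _ ≤ x * Real.exp (-x^2/2) * (Real.sqrt 2 * Real.sqrt (n * x^4 + 1/2)) := by
        exact mul_le_mul_of_nonneg_left h1 hxe
    _ = Real.sqrt 2 * (x * Real.exp (-x^2/2)) * Real.sqrt (n * x^4 + 1/2) := by ring

lemma Z2b_eq {n : ℝ} (hn : 0 < n) :
    Z2b n = (Real.sqrt π)⁻¹ * ∫ x in Ioi (0:ℝ), Kf n x := by
  have hF : Integrable (Function.uncurry fun w1 w2 : ℝ =>
      |w2| * Real.exp (-(n * (w1 ^ 2 * w2 ^ 4))) *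
        (1 / (2 * π) * Real.exp (-(w1 ^ 2 + w2 ^ 2) / 2)))
      (volume.prod volume) := by
    have hg1 : Integrable (fun x : ℝ => Real.exp (-(1/2) * x^2) * (1 / (2*π))) :=
      (integrable_exp_neg_mul_sq (by norm_num : (0:ℝ) < 1/2)).mul_const _
    have hg2 : Integrable (fun x : ℝ => |x| * Real.exp (-(1/2) * x^2)) := by
      have := (integrable_mul_exp_neg_mul_sq (by norm_num : (0:ℝ) < 1/2)).abs
      refine this.congr (Filter.Eventually.of_forall fun x => ?_)
      simp [abs_mul, abs_of_pos (Real.exp_pos _)]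
    have hG := hg1.mul_prod hg2
    refine hG.mono' ?_ ?_
    · apply Continuous.aestronglyMeasurable
      apply Continuous.mul
      · apply Continuous.mul
        · exact continuous_abs.comp continuous_snd
        · exact Real.continuous_exp.comp (by fun_prop)
      · exact continuous_const.mul (Real.continuous_exp.comp (by fun_prop))
    · refine Filter.Eventually.of_forall fun p => ?_
      have h1 : Real.exp (-(n * (p.1 ^ 2 * p.2 ^ 4))) ≤ 1 := by
        rw [Real.exp_le_one_iff]
        have : (0:ℝ) ≤ n * (p.1 ^ 2 * p.2 ^ 4) := by positivity
        linarith
      have hB : Real.exp (-(p.1^2+p.2^2)/2)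
          = Real.exp (-(1/2)*p.1^2) * Real.exp (-(1/2)*p.2^2) := by
        rw [← Real.exp_add]; congr 1; ring
      have hval : Function.uncurry (fun w1 w2 : ℝ =>
          |w2| * Real.exp (-(n * (w1 ^ 2 * w2 ^ 4))) *
            (1 / (2 * π) * Real.exp (-(w1 ^ 2 + w2 ^ 2) / 2))) p
          = |p.2| * Real.exp (-(n * (p.1 ^ 2 * p.2 ^ 4))) *
            (1 / (2 * π) * Real.exp (-(p.1 ^ 2 + p.2 ^ 2) / 2)) := rfl
      have hpi := Real.pi_pos
      rw [hval, Real.norm_eq_abs, abs_of_nonneg (by positivity), hB]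
      calc |p.2| * Real.exp (-(n * (p.1 ^ 2 * p.2 ^ 4))) *
            (1 / (2 * π) * (Real.exp (-(1/2)*p.1^2) * Real.exp (-(1/2)*p.2^2)))
          = (|p.2| * (1 / (2 * π)) * (Real.exp (-(1/2)*p.1^2) * Real.exp (-(1/2)*p.2^2)))
              * Real.exp (-(n * (p.1 ^ 2 * p.2 ^ 4))) := by ring
        _ ≤ (|p.2| * (1 / (2 * π)) * (Real.exp (-(1/2)*p.1^2) * Real.exp (-(1/2)*p.2^2))) * 1 := by
            apply mul_le_mul_of_nonneg_left h1
            have := Real.pi_pos; positivity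
        _ = Real.exp (-(1/2) * p.1 ^ 2) * (1 / (2 * π)) * (|p.2| * Real.exp (-(1/2) * p.2 ^ 2)) := by
            ring
  have hswap : Z2b n = ∫ w2 : ℝ, ∫ w1 : ℝ,
      |w2| * Real.exp (-(n * (w1 ^ 2 * w2 ^ 4))) *
        (1 / (2 * π) * Real.exp (-(w1 ^ 2 + w2 ^ 2) / 2)) := by
    rw [Z2b]; exact MeasureTheory.integral_integral_swap hF
  have inner_eq : ∀ w2 : ℝ, (∫ w1 : ℝ,
      |w2| * Real.exp (-(n * (w1 ^ 2 * w2 ^ 4))) *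
        (1 / (2 * π) * Real.exp (-(w1 ^ 2 + w2 ^ 2) / 2)))
      = |w2| * (1 / (2 * π)) * Real.exp (-w2^2/2) * Real.sqrt (π / (n * w2^4 + 1/2)) := by
    intro w2
    have key : ∀ w1 : ℝ, |w2| * Real.exp (-(n * (w1 ^ 2 * w2 ^ 4))) *
        (1 / (2 * π) * Real.exp (-(w1 ^ 2 + w2 ^ 2) / 2))
        = (|w2| * (1 / (2 * π)) * Real.exp (-w2^2/2)) *
            Real.exp (-(n * w2^4 + 1/2) * w1^2) := by
      intro w1
      rw [show (|w2| * (1 / (2 * π)) * Real.exp (-w2^2/2)) *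
            Real.exp (-(n * w2^4 + 1/2) * w1^2)
          = |w2| * (1/(2*π)) * (Real.exp (-w2^2/2) *
              Real.exp (-(n*w2^4+1/2)*w1^2)) by ring, ← Real.exp_add]
      rw [show |w2| * Real.exp (-(n * (w1 ^ 2 * w2 ^ 4))) *
            (1 / (2 * π) * Real.exp (-(w1 ^ 2 + w2 ^ 2) / 2))
          = |w2| * (1/(2*π)) * (Real.exp (-(n * (w1 ^ 2 * w2 ^ 4))) *
              Real.exp (-(w1^2+w2^2)/2)) by ring, ← Real.exp_add]
      congr 2
      ring
    simp_rw [key]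
    rw [MeasureTheory.integral_const_mul, integral_gaussian]
  rw [hswap]
  simp_rw [inner_eq]
  have habs : ∀ w2 : ℝ, |w2| * (1 / (2 * π)) * Real.exp (-w2^2/2)
      * Real.sqrt (π / (n * w2^4 + 1/2))
      = (fun x : ℝ => x * (1 / (2 * π)) * Real.exp (-x^2/2)
        * Real.sqrt (π / (n * x^4 + 1/2))) |w2| := by
    intro w2
    simp only [sq_abs, show |w2| ^ 4 = w2 ^ 4 from by
      rw [← abs_pow, abs_of_nonneg (by positivity)]]
  calc (∫ w2 : ℝ, |w2| * (1 / (2 * π)) * Real.exp (-w2^2/2)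
        * Real.sqrt (π / (n * w2^4 + 1/2)))
      = ∫ x : ℝ, (fun x : ℝ => x * (1 / (2 * π)) * Real.exp (-x^2/2)
        * Real.sqrt (π / (n * x^4 + 1/2))) |x| := by simp_rw [habs]
    _ = 2 * ∫ x in Ioi (0:ℝ), x * (1 / (2 * π)) * Real.exp (-x^2/2)
        * Real.sqrt (π / (n * x^4 + 1/2)) := by
        exact integral_comp_abs (f := fun x : ℝ => x * (1 / (2 * π)) * Real.exp (-x^2/2)
          * Real.sqrt (π / (n * x^4 + 1/2)))
    _ = (Real.sqrt π)⁻¹ * ∫ x in Ioi (0:ℝ), Kf n x := ?_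
  rw [← MeasureTheory.integral_const_mul, ← MeasureTheory.integral_const_mul]
  apply MeasureTheory.setIntegral_congr_fun measurableSet_Ioi
  intro x hx
  have hden : (0:ℝ) < n * x^4 + 1/2 := by positivity
  have hs := sqrt_den_pos hn x
  have hpi := Real.pi_pos
  have hspi : (0:ℝ) < Real.sqrt π := Real.sqrt_pos.2 hpi
  have h2 : Real.sqrt π * Real.sqrt π = π := Real.mul_self_sqrt hpi.le
  simp only [Kf]
  rw [Real.sqrt_div hpi.le]
  field_simp
  ring_nf
  rw [Real.sq_sqrt hpi.le]

lemma J_eq {n : ℝ} (hn : 0 < n) :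
    ∫ x in (0:ℝ)..1, x / Real.sqrt (n * x^4 + 1/2)
      = Real.arsinh (Real.sqrt (2*n)) / (2 * Real.sqrt n) := by
  have hsn : (0:ℝ) < Real.sqrt n := Real.sqrt_pos.2 hn
  have h2n : (0:ℝ) ≤ 2*n := by linarith
  have hderiv : ∀ x ∈ Set.uIcc (0:ℝ) 1,
      HasDerivAt (fun y : ℝ => Real.arsinh (Real.sqrt (2*n) * y^2) / (2 * Real.sqrt n))
        (x / Real.sqrt (n * x^4 + 1/2)) x := by
    intro x _
    have hinner : HasDerivAt (fun y : ℝ => Real.sqrt (2*n) * y^2)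
        (Real.sqrt (2*n) * (2*x)) x := by
      simpa using ((hasDerivAt_pow 2 x).const_mul (Real.sqrt (2*n)))
    have houter := Real.hasDerivAt_arsinh (Real.sqrt (2*n) * x^2)
    have hcomp := (houter.comp x hinner).div_const (2 * Real.sqrt n)
    refine hcomp.congr_deriv ?_
    symm
    have hsq : (Real.sqrt (2*n) * x^2)^2 = 2*n*x^4 := by
      rw [mul_pow, Real.sq_sqrt h2n]; ring
    rw [hsq]
    have h1 : Real.sqrt (1 + 2*n*x^4) = Real.sqrt 2 * Real.sqrt (n * x^4 + 1/2) := by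
      rw [← Real.sqrt_mul (by norm_num : (0:ℝ) ≤ 2)]
      congr 1; ring
    have h2 : Real.sqrt (2*n) = Real.sqrt 2 * Real.sqrt n :=
      Real.sqrt_mul (by norm_num) n
    rw [h1, h2]
    have hs := sqrt_den_pos hn x
    have hs2 : (0:ℝ) < Real.sqrt 2 := by positivity
    field_simp
  have hint : IntervalIntegrable (fun x : ℝ => x / Real.sqrt (n * x^4 + 1/2))
      volume 0 1 := by
    apply Continuous.intervalIntegrable
    apply Continuous.div continuous_id
      (Real.continuous_sqrt.comp (by continuity))
      (fun x => (sqrt_den_pos hn x).ne')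
  rw [intervalIntegral.integral_eq_sub_of_hasDerivAt hderiv hint]
  simp [Real.arsinh_zero]

noncomputable def Ctail : ℝ := ∫ x in Ioi (1:ℝ), x * Real.exp (-x^2/2)

lemma Ctail_nonneg : 0 ≤ Ctail := by
  apply MeasureTheory.setIntegral_nonneg measurableSet_Ioi
  intro x hx
  have : (0:ℝ) < x := lt_trans zero_lt_one hx
  positivity

lemma xexp_integrable : Integrable (fun x : ℝ => x * Real.exp (-x^2/2)) := by
  have := integrable_mul_exp_neg_mul_sq (by norm_num : (0:ℝ) < 1/2)
  refine this.congr (Filter.Eventually.of_forall fun x => ?_)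
  congr 1; ring_nf

lemma sqrt_den_ge {n : ℝ} (hn : 0 < n) (x : ℝ) :
    Real.sqrt n * x^2 ≤ Real.sqrt (n * x^4 + 1/2) := by
  have : Real.sqrt n * x^2 = Real.sqrt (n * x^4) := by
    rw [show n * x^4 = n * (x^2)^2 by ring, Real.sqrt_mul hn.le,
      Real.sqrt_sq (sq_nonneg x)]
  rw [this]
  apply Real.sqrt_le_sqrt; linarith

lemma K_sub_J_bound {n : ℝ} (hn : 0 < n) :
    |(∫ x in Ioi (0:ℝ), Kf n x) - Real.arsinh (Real.sqrt (2*n)) / (2 * Real.sqrt n)|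
      ≤ (1/2 + Ctail) / Real.sqrt n := by
  have hsn : (0:ℝ) < Real.sqrt n := Real.sqrt_pos.2 hn
  have hI1 : IntegrableOn (Kf n) (Ioc 0 1) :=
    (Kf_integrableOn hn).mono_set Ioc_subset_Ioi_self
  have hI2 : IntegrableOn (Kf n) (Ioi 1) :=
    (Kf_integrableOn hn).mono_set (Ioi_subset_Ioi zero_le_one)
  have hsplit : (∫ x in Ioi (0:ℝ), Kf n x)
      = (∫ x in Ioc (0:ℝ) 1, Kf n x) + ∫ x in Ioi (1:ℝ), Kf n x := by
    rw [← MeasureTheory.setIntegral_union (Ioc_disjoint_Ioi le_rfl) measurableSet_Ioi hI1 hI2,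
      Ioc_union_Ioi_eq_Ioi zero_le_one]
  have hJ : Real.arsinh (Real.sqrt (2*n)) / (2 * Real.sqrt n)
      = ∫ x in Ioc (0:ℝ) 1, x / Real.sqrt (n * x^4 + 1/2) := by
    rw [← J_eq hn, intervalIntegral.integral_of_le zero_le_one]
  -- bound on middle part
  have hgint : IntegrableOn (fun x : ℝ => x / Real.sqrt (n * x^4 + 1/2)) (Ioc 0 1) := by
    apply Continuous.integrableOn_Ioc
    exact Continuous.div continuous_id
      (Real.continuous_sqrt.comp (by continuity)) (fun x => (sqrt_den_pos hn x).ne')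
  have hbd1 : ‖∫ x in Ioc (0:ℝ) 1, (Kf n x - x / Real.sqrt (n * x^4 + 1/2))‖
      ≤ 1/(2*Real.sqrt n) * (volume (Ioc (0:ℝ) 1)).toReal := by
    apply norm_setIntegral_le_of_norm_le_const (by simp)
    intro x hx
    obtain ⟨hx0, hx1⟩ := hx
    have hs := sqrt_den_pos hn x
    have hE : Real.exp (-x^2/2) ≤ 1 := by
      rw [Real.exp_le_one_iff]; nlinarith
    have hE2 : 1 - Real.exp (-x^2/2) ≤ x^2/2 := by
      have := Real.add_one_le_exp (-x^2/2)
      linarith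
    have hKg : Kf n x - x / Real.sqrt (n * x^4 + 1/2)
        = -(x * (1 - Real.exp (-x^2/2)) / Real.sqrt (n * x^4 + 1/2)) := by
      simp only [Kf]; field_simp; ring
    rw [hKg, norm_neg, Real.norm_eq_abs,
      abs_of_nonneg (div_nonneg (mul_nonneg hx0.le (by linarith)) hs.le)]
    have hd := sqrt_den_ge hn x
    have hx2 : (0:ℝ) < x^2 := by positivity
    calc x * (1 - Real.exp (-x^2/2)) / Real.sqrt (n * x^4 + 1/2)
        ≤ (x * (x^2/2)) / (Real.sqrt n * x^2) := by
          apply div_le_div₀ (by positivity) _ (by positivity) hd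
          have : x * (1 - Real.exp (-x^2/2)) ≤ x * (x^2/2) :=
            mul_le_mul_of_nonneg_left hE2 hx0.le
          linarith
      _ = x / (2 * Real.sqrt n) := by field_simp
      _ ≤ 1 / (2 * Real.sqrt n) := by gcongr
      _ = 1/(2*Real.sqrt n) := by ring
  have hvol : (volume (Ioc (0:ℝ) 1)).toReal = 1 := by simp
  rw [hvol, mul_one] at hbd1
  -- tail bound
  have htail_nonneg : 0 ≤ ∫ x in Ioi (1:ℝ), Kf n x := by
    apply MeasureTheory.setIntegral_nonneg measurableSet_Ioi
    intro x hx
    have hx1 : (0:ℝ) < x := lt_trans zero_lt_one hx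
    have hs := sqrt_den_pos hn x
    apply div_nonneg (by positivity) hs.le
  have htail : (∫ x in Ioi (1:ℝ), Kf n x) ≤ Ctail / Real.sqrt n := by
    have hmono : (∫ x in Ioi (1:ℝ), Kf n x)
        ≤ ∫ x in Ioi (1:ℝ), (Real.sqrt n)⁻¹ * (x * Real.exp (-x^2/2)) := by
      apply MeasureTheory.setIntegral_mono_on hI2
        ((xexp_integrable.const_mul _).integrableOn) measurableSet_Ioi
      intro x hx
      have hx1 : (1:ℝ) < x := hx
      have hx0 : (0:ℝ) < x := lt_trans zero_lt_one hx1
      have hs := sqrt_den_pos hn x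
      have hd : Real.sqrt n ≤ Real.sqrt (n * x^4 + 1/2) := by
        refine le_trans ?_ (sqrt_den_ge hn x)
        nlinarith [mul_nonneg hsn.le (mul_nonneg (by linarith : (0:ℝ) ≤ x-1) (by linarith : (0:ℝ) ≤ x+1))]
      rw [show (Real.sqrt n)⁻¹ * (x * Real.exp (-x^2/2))
          = (x * Real.exp (-x^2/2)) / Real.sqrt n by ring]
      exact div_le_div_of_nonneg_left (by positivity) hsn hd
    calc (∫ x in Ioi (1:ℝ), Kf n x)
        ≤ ∫ x in Ioi (1:ℝ), (Real.sqrt n)⁻¹ * (x * Real.exp (-x^2/2)) := hmono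
      _ = (Real.sqrt n)⁻¹ * Ctail := by rw [MeasureTheory.integral_const_mul]; rfl
      _ = Ctail / Real.sqrt n := by ring
  -- combine
  rw [hsplit, hJ]
  have : (∫ x in Ioc (0:ℝ) 1, Kf n x) + (∫ x in Ioi (1:ℝ), Kf n x)
      - ∫ x in Ioc (0:ℝ) 1, x / Real.sqrt (n * x^4 + 1/2)
      = (∫ x in Ioc (0:ℝ) 1, (Kf n x - x / Real.sqrt (n * x^4 + 1/2)))
        + ∫ x in Ioi (1:ℝ), Kf n x := by
    rw [MeasureTheory.integral_sub hI1 hgint]; ring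
  rw [this]
  have hA : |∫ x in Ioc (0:ℝ) 1, (Kf n x - x / Real.sqrt (n * x^4 + 1/2))|
      ≤ 1/(2*Real.sqrt n) := by rwa [Real.norm_eq_abs] at hbd1
  calc |(∫ x in Ioc (0:ℝ) 1, (Kf n x - x / Real.sqrt (n * x^4 + 1/2)))
        + ∫ x in Ioi (1:ℝ), Kf n x|
      ≤ |∫ x in Ioc (0:ℝ) 1, (Kf n x - x / Real.sqrt (n * x^4 + 1/2))|
        + |∫ x in Ioi (1:ℝ), Kf n x| := abs_add_le _ _
    _ ≤ 1/(2*Real.sqrt n) + Ctail/Real.sqrt n := by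
        apply add_le_add hA
        rwa [abs_of_nonneg htail_nonneg]
    _ = (1/2 + Ctail) / Real.sqrt n := by field_simp

lemma tendsto_arsinh_div_log :
    Tendsto (fun n : ℝ => Real.arsinh (Real.sqrt (2*n)) / (2 * Real.log n)) atTop
      (nhds (1/4)) := by
  have hev : ∀ᶠ n in atTop, Real.arsinh (Real.sqrt (2*n)) / (2 * Real.log n)
      = 1/4 + Real.log (Real.sqrt 2 + Real.sqrt (1/n + 2)) / (2 * Real.log n) := by
    filter_upwards [eventually_ge_atTop (2:ℝ)] with n hn2
    have hn : (0:ℝ) < n := by linarith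
    have hsn : (0:ℝ) < Real.sqrt n := Real.sqrt_pos.2 hn
    have hlog : (0:ℝ) < Real.log n := Real.log_pos (by linarith)
    have hc : (0:ℝ) < Real.sqrt 2 + Real.sqrt (1/n + 2) := by positivity
    have h2n : (0:ℝ) ≤ 2*n := by linarith
    have hx2 : (Real.sqrt (2*n))^2 = 2*n := Real.sq_sqrt h2n
    have hsum : Real.sqrt (2*n) + Real.sqrt (1 + 2*n)
        = Real.sqrt n * (Real.sqrt 2 + Real.sqrt (1/n + 2)) := by
      rw [mul_add]
      congr 1
      · rw [Real.sqrt_mul (by norm_num : (0:ℝ) ≤ 2) n, mul_comm]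
      · rw [← Real.sqrt_mul hn.le]
        congr 1
        field_simp
    have harsinh : Real.arsinh (Real.sqrt (2*n))
        = Real.log n / 2 + Real.log (Real.sqrt 2 + Real.sqrt (1/n + 2)) := by
      rw [Real.arsinh, hx2, hsum, Real.log_mul hsn.ne' hc.ne', Real.log_sqrt hn.le]
    rw [harsinh]
    field_simp
    ring
  rw [show (1:ℝ)/4 = 1/4 + 0 by norm_num]
  apply Tendsto.congr' (Filter.EventuallyEq.symm hev)
  apply Tendsto.add tendsto_const_nhds
  apply Filter.Tendsto.div_atTop (a := Real.log (Real.sqrt 2 + Real.sqrt 2))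
  · apply Filter.Tendsto.log
    · apply Filter.Tendsto.const_add
      apply Filter.Tendsto.sqrt
      have h1 : Tendsto (fun n : ℝ => 1/n + 2) atTop (nhds (0 + 2)) := by
        apply Tendsto.add_const
        exact (tendsto_inv_atTop_zero (𝕜 := ℝ)).congr (fun x => (one_div x).symm)
      simpa using h1
    · positivity
  · exact Real.tendsto_log_atTop.const_mul_atTop two_pos

/-- `n^(1/2)·Z₂(n)/log n → (1/(4π))·Γ(1/2) = 1/(4√π)` as `n → ∞`. -/
theorem Z2b_asymptotic :
    Tendsto (fun n : ℝ => n ^ (1/2 : ℝ) * Z2b n / Real.log n) atTop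
      (nhds (1 / (4 * Real.sqrt π))) := by
  have hspi : (0:ℝ) < Real.sqrt π := Real.sqrt_pos.2 Real.pi_pos
  have h1 : Tendsto (fun n : ℝ => (Real.sqrt π)⁻¹ *
      (Real.arsinh (Real.sqrt (2*n)) / (2 * Real.log n))) atTop
      (nhds ((Real.sqrt π)⁻¹ * (1/4))) := tendsto_arsinh_div_log.const_mul _
  have h2 : Tendsto (fun n : ℝ => (Real.sqrt π)⁻¹ *
      (Real.sqrt n * ((∫ x in Ioi (0:ℝ), Kf n x)
        - Real.arsinh (Real.sqrt (2*n)) / (2 * Real.sqrt n)) / Real.log n)) atTop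
      (nhds 0) := by
    apply squeeze_zero_norm' (a := fun n : ℝ => (Real.sqrt π)⁻¹ * ((1/2 + Ctail) / Real.log n))
    · filter_upwards [eventually_ge_atTop (2:ℝ)] with n hn2
      have hn : (0:ℝ) < n := by linarith
      have hsn : (0:ℝ) < Real.sqrt n := Real.sqrt_pos.2 hn
      have hlog : 0 < Real.log n := Real.log_pos (by linarith)
      rw [Real.norm_eq_abs, abs_mul, abs_of_nonneg (inv_nonneg.2 hspi.le)]
      apply mul_le_mul_of_nonneg_left _ (inv_nonneg.2 hspi.le)
      rw [abs_div, abs_of_pos hlog, abs_mul, abs_of_pos hsn]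
      gcongr
      calc Real.sqrt n * |(∫ x in Ioi (0:ℝ), Kf n x)
            - Real.arsinh (Real.sqrt (2*n)) / (2 * Real.sqrt n)|
          ≤ Real.sqrt n * ((1/2 + Ctail) / Real.sqrt n) :=
            mul_le_mul_of_nonneg_left (K_sub_J_bound hn) hsn.le
        _ = 1/2 + Ctail := by field_simp
    · have := (Filter.Tendsto.div_atTop (tendsto_const_nhds (x := (1:ℝ)/2 + Ctail))
        Real.tendsto_log_atTop).const_mul ((Real.sqrt π)⁻¹)
      simpa using this
  have hev : ∀ᶠ n in atTop, n ^ (1/2 : ℝ) * Z2b n / Real.log n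
      = (Real.sqrt π)⁻¹ * (Real.arsinh (Real.sqrt (2*n)) / (2 * Real.log n))
        + (Real.sqrt π)⁻¹ * (Real.sqrt n * ((∫ x in Ioi (0:ℝ), Kf n x)
          - Real.arsinh (Real.sqrt (2*n)) / (2 * Real.sqrt n)) / Real.log n) := by
    filter_upwards [eventually_ge_atTop (2:ℝ)] with n hn2
    have hn : (0:ℝ) < n := by linarith
    have hsn : (0:ℝ) < Real.sqrt n := Real.sqrt_pos.2 hn
    have hlog : 0 < Real.log n := Real.log_pos (by linarith)
    rw [Z2b_eq hn, ← Real.sqrt_eq_rpow]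
    field_simp
    ring
  have hlim := (Tendsto.congr' (Filter.EventuallyEq.symm hev) (h1.add h2))
  have hval : (Real.sqrt π)⁻¹ * (1/4) + 0 = 1 / (4 * Real.sqrt π) := by
    field_simp; ring
  rwa [hval] at hlim
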